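/- For every real number x with 0 < |x| < 2π, the series \(\sum_{n\ge 0} B_{2n} x^{2n}/(2n)!\) converges and its sum equals \((x/2)\coth(x/2)\). -/

import Mathlib

open Real Finset

private lemma bern_div_fact_bound (n : ℕ) :
    |(bernoulli n : ℝ) / (Nat.factorial n : ℝ)| ≤ 4 / (2 * π) ^ n := by
  rcases n with _ | _ | n
  · norm_num
  · norm_num [bernoulli_one]
    rw [div_le_div_iff₀ (by norm_num) (by positivity)]
    nlinarith [pi_le_four]
  · rcases Nat.even_or_odd (n + 2) with ⟨k, hk⟩ | hodd
    · have hk2 : n + 2 = 2 * k := by omega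
      have hk0 : k ≠ 0 := by omega
      rw [hk2]
      have hZ := hasSum_zeta_nat hk0
      have hle : ((-1:ℝ)) ^ (k + 1) * 2 ^ (2 * k - 1) * π ^ (2 * k) *
          (bernoulli (2 * k) : ℝ) / ((2 * k).factorial : ℝ) ≤ π ^ 2 / 6 := by
        refine hasSum_le (fun i => ?_) hZ hasSum_zeta_two
        rcases Nat.eq_zero_or_pos i with rfl | hi
        · norm_num [zero_pow (show 2 * k ≠ 0 by omega)]
        · have h1 : (1:ℝ) ≤ (i:ℝ) := by exact_mod_cast hi
          have := pow_le_pow_right₀ h1 (by omega : 2 ≤ 2 * k)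
          exact one_div_le_one_div_of_le (by positivity) this
      have hnn : (0:ℝ) ≤ ((-1:ℝ)) ^ (k + 1) * 2 ^ (2 * k - 1) * π ^ (2 * k) *
          (bernoulli (2 * k) : ℝ) / ((2 * k).factorial : ℝ) :=
        hasSum_le (fun i => by positivity) hasSum_zero hZ
      have habs : |((-1:ℝ)) ^ (k + 1) * 2 ^ (2 * k - 1) * π ^ (2 * k) *
          (bernoulli (2 * k) : ℝ) / ((2 * k).factorial : ℝ)| =
          2 ^ (2 * k - 1) * π ^ (2 * k) * |(bernoulli (2 * k) : ℝ) / ((2 * k).factorial : ℝ)| := by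
        simp only [abs_div, abs_mul, abs_pow, abs_neg, abs_one, one_pow, one_mul, abs_two,
          abs_of_pos pi_pos, Nat.abs_cast]
        ring
      have hb : 2 ^ (2 * k - 1) * π ^ (2 * k) * |(bernoulli (2 * k) : ℝ) / ((2 * k).factorial : ℝ)|
          ≤ 2 := by
        rw [← habs, abs_of_nonneg hnn]
        nlinarith [pi_lt_d2, pi_gt_three]
      have h2k : (2 * π) ^ (2 * k) = 2 * (2 ^ (2 * k - 1) * π ^ (2 * k)) := by
        rw [mul_pow, ← mul_assoc]
        congr 1
        rw [← pow_succ']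
        congr 1
        omega
      rw [le_div_iff₀ (by positivity), h2k]
      nlinarith [abs_nonneg ((bernoulli (2 * k) : ℝ) / ((2 * k).factorial : ℝ)),
        pow_pos (by positivity : (0:ℝ) < 2) (2 * k - 1), pow_pos pi_pos (2 * k)]
    · have h1 : n + 2 ≠ 1 := by omega
      have hz : bernoulli (n + 2) = 0 := by
        rw [bernoulli_eq_bernoulli'_of_ne_one h1]
        exact bernoulli'_eq_zero_of_odd hodd (by omega)
      rw [hz]
      simp
      positivity

theorem hasSum_bernoulli_coth (x : ℝ) (hx : 0 < |x|) (hx' : |x| < 2 * π) :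
    HasSum (fun n : ℕ => (bernoulli (2 * n) : ℝ) * x ^ (2 * n) / (Nat.factorial (2 * n) : ℝ))
      (x / 2 * (Real.cosh (x / 2) / Real.sinh (x / 2))) := by
  have hx0 : x ≠ 0 := abs_pos.mp hx
  set c : ℕ → ℝ := fun n => (bernoulli n : ℝ) * x ^ n / (Nat.factorial n : ℝ) with hc_def
  set g : ℕ → ℝ := fun n => x ^ n / (Nat.factorial n : ℝ) - (if n = 0 then 1 else 0) with hg_def
  -- summability of ‖c‖
  have hr0 : (0:ℝ) ≤ |x| / (2 * π) := by positivity
  have hr1 : |x| / (2 * π) < 1 := (div_lt_one (by positivity)).mpr hx'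
  have hnormc : Summable fun n => ‖c n‖ := by
    refine Summable.of_nonneg_of_le (fun n => norm_nonneg _) (fun n => ?_)
      ((summable_geometric_of_lt_one hr0 hr1).mul_left 4)
    have h1 : ‖c n‖ = |(bernoulli n : ℝ) / (Nat.factorial n : ℝ)| * |x| ^ n := by
      simp only [hc_def, Real.norm_eq_abs]
      rw [show (bernoulli n : ℝ) * x ^ n / (Nat.factorial n : ℝ)
        = ((bernoulli n : ℝ) / (Nat.factorial n : ℝ)) * x ^ n by ring, abs_mul, abs_pow]
    rw [h1]
    calc |(bernoulli n : ℝ) / (Nat.factorial n : ℝ)| * |x| ^ n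
        ≤ (4 / (2 * π) ^ n) * |x| ^ n := by
          gcongr
          exact bern_div_fact_bound n
      _ = 4 * (|x| / (2 * π)) ^ n := by rw [div_pow]; ring
  have hsumc : Summable c := hnormc.of_norm
  -- exp series
  have hexp : HasSum (fun n : ℕ => x ^ n / (Nat.factorial n : ℝ)) (Real.exp x) := by
    rw [Real.exp_eq_exp_ℝ]
    exact NormedSpace.expSeries_div_hasSum_exp x
  have hg : HasSum g (Real.exp x - 1) := by
    simpa [hg_def] using hexp.sub (hasSum_ite_eq 0 (1:ℝ))
  have hnormg : Summable fun n => ‖g n‖ := by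
    refine Summable.of_nonneg_of_le (fun n => norm_nonneg _) (fun n => ?_)
      ((Real.summable_pow_div_factorial |x|).add (hasSum_ite_eq 0 (1:ℝ)).summable)
    calc ‖g n‖ ≤ ‖x ^ n / (Nat.factorial n : ℝ)‖ + ‖(if n = 0 then (1:ℝ) else 0)‖ :=
        norm_sub_le _ _
      _ = |x| ^ n / (Nat.factorial n : ℝ) + (if n = 0 then (1:ℝ) else 0) := by
        rw [Real.norm_eq_abs, Real.norm_eq_abs, abs_div, abs_pow, Nat.abs_cast]
        congr 1
        split_ifs <;> simp
  -- the formal coefficient identity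
  have hcoeff : ∀ n : ℕ, (∑ kl ∈ antidiagonal n,
      ((bernoulli kl.1 : ℝ) / (Nat.factorial kl.1 : ℝ)) *
        ((1:ℝ) / (Nat.factorial kl.2 : ℝ) - if kl.2 = 0 then 1 else 0))
      = if n = 1 then 1 else 0 := by
    intro n
    have h := congrArg (PowerSeries.coeff (R := ℝ) n) (bernoulliPowerSeries_mul_exp_sub_one ℝ)
    rw [PowerSeries.coeff_mul, PowerSeries.coeff_X] at h
    rw [← h]
    refine Finset.sum_congr rfl fun kl _ => ?_
    rw [bernoulliPowerSeries, PowerSeries.coeff_mk, map_sub, PowerSeries.coeff_exp,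
      PowerSeries.coeff_one, eq_ratCast, eq_ratCast]
    push_cast
    ring
  -- Cauchy product terms
  have hterm : ∀ n : ℕ, (∑ kl ∈ antidiagonal n, c kl.1 * g kl.2) = if n = 1 then x else 0 := by
    intro n
    have step : (∑ kl ∈ antidiagonal n, c kl.1 * g kl.2)
        = x ^ n * ∑ kl ∈ antidiagonal n,
            ((bernoulli kl.1 : ℝ) / (Nat.factorial kl.1 : ℝ)) *
              ((1:ℝ) / (Nat.factorial kl.2 : ℝ) - if kl.2 = 0 then 1 else 0) := by
      rw [Finset.mul_sum]
      refine Finset.sum_congr rfl fun kl hkl => ?_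
      have hadd : kl.1 + kl.2 = n := Finset.HasAntidiagonal.mem_antidiagonal.mp hkl
      rw [hc_def, hg_def]
      simp only
      by_cases h2 : kl.2 = 0
      · simp [h2]
      · rw [if_neg h2, ← hadd, pow_add]
        ring
    rw [step, hcoeff n]
    split_ifs with h
    · rw [h, pow_one, mul_one]
    · rw [mul_zero]
  -- sum of c equals x / (exp x - 1)
  have hexpne : Real.exp x - 1 ≠ 0 := by
    intro h
    exact hx0 ((Real.exp_eq_one_iff x).mp (by linarith [sub_eq_zero.mp h]))
  have hmul : (∑' n, c n) * (Real.exp x - 1) = x := by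
    rw [← hg.tsum_eq, tsum_mul_tsum_eq_tsum_sum_antidiagonal_of_summable_norm hnormc hnormg,
      tsum_congr hterm, (hasSum_ite_eq 1 x).tsum_eq]
  have hS : HasSum c (x / (Real.exp x - 1)) := by
    have : (∑' n, c n) = x / (Real.exp x - 1) := by
      field_simp
      linarith [hmul]
    exact this ▸ hsumc.hasSum
  -- remove the n = 1 term
  have hc1 : c 1 = -x / 2 := by
    simp [hc_def, bernoulli_one]
    ring
  have hS' : HasSum (fun n => c n - if n = 1 then c 1 else 0) (x / (Real.exp x - 1) - c 1) :=
    hS.sub (hasSum_ite_eq 1 (c 1))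
  -- reindex over even indices
  have hinj : Function.Injective (fun n : ℕ => 2 * n) := fun a b h => by
    have h' : 2 * a = 2 * b := h
    omega
  have hvanish : ∀ m ∉ Set.range (fun n : ℕ => 2 * n),
      (c m - if m = 1 then c 1 else 0) = 0 := by
    intro m hm
    have hodd : Odd m := by
      rcases Nat.even_or_odd m with ⟨r, hr⟩ | h
      · exact absurd ⟨r, show 2 * r = m by omega⟩ hm
      · exact h
    by_cases h1 : m = 1
    · simp [h1]
    · have hz : bernoulli m = 0 := by
        rw [bernoulli_eq_bernoulli'_of_ne_one h1]
        refine bernoulli'_eq_zero_of_odd hodd ?_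
        rcases hodd with ⟨r, hr⟩
        omega
      simp [hc_def, hz, h1]
  have hfinal : HasSum (fun n : ℕ => c (2 * n)) (x / (Real.exp x - 1) - c 1) := by
    have := (Function.Injective.hasSum_iff hinj hvanish).mpr hS'
    refine this.congr_fun fun n => ?_
    simp only [Function.comp]
    rw [if_neg (by omega : ¬ 2 * n = 1), sub_zero]
  -- identify the sum with coth
  have hsumval : x / (Real.exp x - 1) - c 1
      = x / 2 * (Real.cosh (x / 2) / Real.sinh (x / 2)) := by
    rw [hc1, Real.cosh_eq, Real.sinh_eq, Real.exp_neg]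
    set u := Real.exp (x / 2) with hu_def
    have hu0 : 0 < u := Real.exp_pos _
    have hxx : Real.exp x = u * u := by
      rw [hu_def, ← Real.exp_add]
      norm_num
    have hune : u * u - 1 ≠ 0 := by
      rw [← hxx]
      exact hexpne
    have huinv : u - u⁻¹ ≠ 0 := by
      intro h
      apply hune
      have : u = u⁻¹ := by linarith
      have h2 : u * u = u * u⁻¹ := by rw [← this]
      rw [mul_inv_cancel₀ hu0.ne'] at h2
      linarith
    rw [hxx]
    field_simp
    ring_nf
    have hu2 : -1 + u ^ 2 ≠ 0 := by
      rw [sq]; intro h; apply hune; linarith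
    field_simp
    ring
  rw [← hsumval]
  exact hfinal
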